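/- Let ε > 1 be real, q > 0 real, and s ∈ ℂ with Re s > 0. Then ∑_{n≥1} q^{s/2}·(ε^{2n} − ε^{−2n})^{−s} = q^{s/2} · ∑_{k≥0} C(−s,k) · (−1)^k/(ε^{2s+4k} − 1). -/

import Mathlib

open Complex Filter Topology

/-- Generalized binomial coefficient C(s, k) = s(s-1)⋯(s-k+1)/k!. -/
noncomputable def genBinom (s : ℂ) (k : ℕ) : ℂ :=
  (∏ i ∈ Finset.range k, (s - i)) / (Nat.factorial k)

lemma abs_nat_add_one (k : ℕ) : ‖((k : ℂ) + 1)‖ = (k : ℝ) + 1 := by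
  rw [show ((k : ℂ) + 1) = ((k + 1 : ℕ) : ℂ) by push_cast; ring]
  rw [Complex.norm_natCast]; push_cast; ring

lemma genBinom_zero (a : ℂ) : genBinom a 0 = 1 := by simp [genBinom]

lemma genBinom_succ (a : ℂ) (k : ℕ) :
    ((k : ℂ) + 1) * genBinom a (k + 1) = (a - k) * genBinom a k := by
  have hk : ((Nat.factorial k : ℂ)) ≠ 0 := by exact_mod_cast (Nat.factorial_pos k).ne'
  have hk1 : ((k : ℂ) + 1) ≠ 0 := Nat.cast_add_one_ne_zero k
  simp only [genBinom, Finset.prod_range_succ, Nat.factorial_succ, Nat.cast_mul,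
    Nat.cast_add, Nat.cast_one]
  field_simp

lemma genBinom_ne_zero (a : ℂ) (ha : ∀ i : ℕ, a ≠ (i : ℂ)) (k : ℕ) : genBinom a k ≠ 0 := by
  have hk : ((Nat.factorial k : ℂ)) ≠ 0 := by exact_mod_cast (Nat.factorial_pos k).ne'
  refine div_ne_zero (Finset.prod_ne_zero_iff.2 fun i _ => ?_) hk
  exact sub_ne_zero.2 (ha i)

lemma norm_genBinom_succ (a : ℂ) (k : ℕ) :
    ‖genBinom a (k + 1)‖ = ‖a - k‖ * ‖genBinom a k‖ / ((k : ℝ) + 1) := by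
  have h := congrArg norm (genBinom_succ a k)
  rw [norm_mul, norm_mul, abs_nat_add_one] at h
  have hpos : (0:ℝ) < (k : ℝ) + 1 := by positivity
  rw [eq_div_iff hpos.ne']
  linarith [h]

lemma ratio_tendsto (a : ℂ) :
    Tendsto (fun k : ℕ => ‖a - k‖ / ((k : ℝ) + 1)) atTop (𝓝 1) := by
  have h0 : Tendsto (fun k : ℕ => ‖a + 1‖ / ((k : ℝ) + 1)) atTop (𝓝 0) := by
    have := (tendsto_const_div_atTop_nhds_zero_nat ‖a + 1‖).comp (tendsto_add_atTop_nat 1)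
    refine this.congr fun k => ?_
    simp only [Function.comp_apply]
    push_cast
    ring
  have h1 : Tendsto (fun k : ℕ => ((a + 1) / ((k : ℂ) + 1) : ℂ)) atTop (𝓝 0) := by
    rw [tendsto_zero_iff_norm_tendsto_zero]
    refine h0.congr fun k => ?_
    rw [norm_div, abs_nat_add_one]
  have h2 : Tendsto (fun k : ℕ => ((a + 1) / ((k : ℂ) + 1) - 1 : ℂ)) atTop (𝓝 (0 - 1)) :=
    h1.sub_const 1
  have h3 := (continuous_norm.tendsto (0 - 1 : ℂ)).comp h2
  simp only [zero_sub, norm_neg, norm_one] at h3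
  refine h3.congr fun k => ?_
  have hk1 : ((k : ℂ) + 1) ≠ 0 := Nat.cast_add_one_ne_zero k
  have : (a + 1) / ((k : ℂ) + 1) - 1 = (a - k) / ((k : ℂ) + 1) := by
    field_simp
    ring
  simp only [Function.comp_apply, this, norm_div, abs_nat_add_one]

lemma summable_master (a : ℂ) (ha : ∀ i : ℕ, a ≠ (i : ℂ)) {r : ℝ} (h0 : 0 < r) (h1 : r < 1) :
    Summable (fun k : ℕ => ((k : ℝ) + 1) * ‖genBinom a k‖ * r ^ k) := by
  set v : ℕ → ℝ := fun k => ((k : ℝ) + 1) * ‖genBinom a k‖ * r ^ k with hv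
  have hvpos : ∀ k, 0 < v k := fun k => by
    have := norm_pos_iff.2 (genBinom_ne_zero a ha k)
    positivity
  refine summable_of_ratio_test_tendsto_lt_one h1 (Eventually.of_forall fun k => (hvpos k).ne') ?_
  have key : ∀ k : ℕ, ‖v (k + 1)‖ / ‖v k‖ =
      (((k : ℝ) + 2) / ((k : ℝ) + 1)) * (‖a - k‖ / ((k : ℝ) + 1)) * r := by
    intro k
    rw [Real.norm_of_nonneg (hvpos (k+1)).le, Real.norm_of_nonneg (hvpos k).le]
    have hk1 : ((k:ℝ) + 1) ≠ 0 := by positivity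
    have hnum : v (k + 1) =
        ((((k : ℝ) + 2) / ((k : ℝ) + 1)) * (‖a - k‖ / ((k : ℝ) + 1)) * r) * v k := by
      simp only [hv, norm_genBinom_succ, pow_succ]
      push_cast
      field_simp
      ring
    rw [hnum, mul_div_assoc, div_self (hvpos k).ne', mul_one]
  rw [show (r : ℝ) = 1 * 1 * r by ring]
  refine Tendsto.congr (fun k => (key k).symm) ?_
  refine Tendsto.mul_const r (Tendsto.mul ?_ (ratio_tendsto a))
  have : Tendsto (fun k : ℕ => 1 + 1 / ((k : ℝ) + 1)) atTop (𝓝 (1 + 0)) := by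
    refine tendsto_const_nhds.add ?_
    have := (tendsto_const_div_atTop_nhds_zero_nat (1 : ℝ)).comp (tendsto_add_atTop_nat 1)
    refine this.congr fun k => ?_
    simp only [Function.comp_apply]; push_cast; ring
  simp only [add_zero] at this
  refine this.congr fun k => ?_
  have : ((k : ℝ) + 1) ≠ 0 := by positivity
  field_simp
  ring

lemma summable_norm_genBinom_mul_pow (a : ℂ) (ha : ∀ i : ℕ, a ≠ (i : ℂ)) {r : ℝ}
    (h0 : 0 ≤ r) (h1 : r < 1) : Summable (fun k : ℕ => ‖genBinom a k‖ * r ^ k) := by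
  rcases eq_or_lt_of_le h0 with h | h
  · refine summable_of_ne_finset_zero (s := {0}) fun k hk => ?_
    have : k ≠ 0 := by simpa using hk
    simp [← h, zero_pow this]
  · refine Summable.of_nonneg_of_le (fun k => by positivity) (fun k => ?_) (summable_master a ha h h1)
    have hb : (0:ℝ) ≤ ‖genBinom a k‖ * r ^ k := by positivity
    nlinarith [norm_nonneg (genBinom a k), pow_nonneg h.le k]

lemma summable_deriv_bound (a : ℂ) (ha : ∀ i : ℕ, a ≠ (i : ℂ)) {r : ℝ}
    (h0 : 0 < r) (h1 : r < 1) :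
    Summable (fun k : ℕ => (k : ℝ) * ‖genBinom a k‖ * r ^ (k - 1)) := by
  refine Summable.of_nonneg_of_le (fun k => by positivity) (fun k => ?_)
    ((summable_master a ha h0 h1).mul_right r⁻¹)
  cases k with
  | zero => simp; positivity
  | succ n =>
      have : (r : ℝ) ^ (n + 1 - 1) = r ^ (n + 1) * r⁻¹ := by
        rw [pow_succ]; field_simp; rw [Nat.add_sub_cancel]
      rw [this]
      have hB : (0:ℝ) ≤ ‖genBinom a (n+1)‖ := norm_nonneg _
      have hr : (0:ℝ) ≤ r ^ (n+1) * r⁻¹ := by positivity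
      have hle : ((n+1 : ℕ) : ℝ) ≤ ((n : ℝ) + 1) + 1 := by push_cast; linarith
      push_cast
      nlinarith [pow_nonneg h0.le (n+1), inv_nonneg.2 h0.le]

lemma summable_binom_pow (a : ℂ) (ha : ∀ i : ℕ, a ≠ (i : ℂ)) {x : ℝ} (hx : |x| < 1) :
    Summable (fun k : ℕ => genBinom a k * (x : ℂ) ^ k) := by
  refine Summable.of_norm ?_
  refine Summable.of_nonneg_of_le (fun k => norm_nonneg _) (fun k => ?_)
    (summable_norm_genBinom_mul_pow a ha (abs_nonneg x) hx)
  rw [norm_mul, norm_pow]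
  gcongr
  simp [Complex.norm_real]

lemma binomial_series (a : ℂ) (ha : ∀ i : ℕ, a ≠ (i : ℂ)) {x : ℝ} (hx : |x| < 1) :
    HasSum (fun k : ℕ => genBinom a k * (x : ℂ) ^ k) (((1 + x : ℝ) : ℂ) ^ a) := by
  -- the function and its derivative
  set F : ℝ → ℂ := fun y => ∑' k : ℕ, genBinom a k * (y : ℂ) ^ k with hF
  set F' : ℝ → ℂ := fun y => ∑' k : ℕ, (k : ℂ) * genBinom a k * (y : ℂ) ^ (k - 1) with hF'
  -- differentiability of F on Ioo (-1) 1
  have hderiv : ∀ y ∈ Set.Ioo (-1 : ℝ) 1, HasDerivAt F (F' y) y := by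
    intro y hy
    have hy1 : |y| < 1 := abs_lt.2 ⟨hy.1, hy.2⟩
    set r : ℝ := (|y| + 1) / 2 with hr
    have hyr : |y| < r := by rw [hr]; linarith
    have hr0 : 0 < r := by rw [hr]; positivity
    have hr1 : r < 1 := by rw [hr]; linarith
    refine hasDerivAt_tsum_of_isPreconnected
      (u := fun k : ℕ => (k : ℝ) * ‖genBinom a k‖ * r ^ (k - 1))
      (g := fun (k : ℕ) (z : ℝ) => genBinom a k * (z : ℂ) ^ k)
      (g' := fun (k : ℕ) (z : ℝ) => (k : ℂ) * genBinom a k * (z : ℂ) ^ (k - 1))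
      (t := Set.Ioo (-r) r) (y₀ := y)
      (summable_deriv_bound a ha hr0 hr1) isOpen_Ioo (convex_Ioo _ _).isPreconnected
      ?_ ?_ ?_ ?_ ?_
    · intro k z _
      have h1 : HasDerivAt (fun w : ℝ => ((w : ℂ)) ^ k) ((k : ℂ) * (z : ℂ) ^ (k - 1)) z :=
        (hasDerivAt_pow k ((z : ℂ))).comp_ofReal
      simpa [mul_comm, mul_assoc, mul_left_comm] using h1.const_mul (genBinom a k)
    · intro k z hz
      have hzr : |z| ≤ r := (abs_lt.2 ⟨hz.1, hz.2⟩).le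
      rw [norm_mul, norm_mul, norm_pow]
      have h1 : ‖((z : ℝ) : ℂ)‖ = |z| := by simp
      rw [h1]
      have h2 : ‖((k : ℕ) : ℂ)‖ = (k : ℝ) := by simp
      rw [h2]
      exact mul_le_mul_of_nonneg_left (pow_le_pow_left₀ (abs_nonneg z) hzr _)
        (by positivity)
    · exact Set.mem_Ioo.2 (abs_lt.1 hyr)
    · exact summable_binom_pow a ha (hyr.trans hr1)
    · exact Set.mem_Ioo.2 (abs_lt.1 hyr)
  -- the ODE: (1+y) * F' y = a * F y on Ioo (-1) 1
  have hode : ∀ y ∈ Set.Ioo (-1 : ℝ) 1, (1 + (y : ℂ)) * F' y = a * F y := by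
    intro y hy
    have hy1 : |y| < 1 := abs_lt.2 ⟨hy.1, hy.2⟩
    set w : ℂ := (y : ℂ) with hw
    have hwn : ‖w‖ = |y| := by rw [hw]; simp
    -- summabilities
    have S1 : Summable (fun k : ℕ => genBinom a k * w ^ k) := summable_binom_pow a ha hy1
    have Sd : Summable (fun k : ℕ => (k : ℂ) * genBinom a k * w ^ (k - 1)) := by
      refine Summable.of_norm (Summable.of_nonneg_of_le (fun k => norm_nonneg _) (fun k => ?_)
        (summable_deriv_bound a ha (by positivity : (0:ℝ) < (|y|+1)/2) (by linarith)))
      rw [norm_mul, norm_mul, norm_pow, hwn]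
      have h2 : ‖((k : ℕ) : ℂ)‖ = (k : ℝ) := by simp
      rw [h2]
      exact mul_le_mul_of_nonneg_left (pow_le_pow_left₀ (abs_nonneg y) (by linarith) _)
        (by positivity)
    have S2 : Summable (fun k : ℕ => (k : ℂ) * genBinom a k * w ^ k) := by
      refine Summable.of_norm (Summable.of_nonneg_of_le (fun k => norm_nonneg _) (fun k => ?_)
        ((summable_master a ha (r := (|y|+1)/2) (by positivity : (0:ℝ) < (|y|+1)/2) (by linarith))))
      rw [norm_mul, norm_mul, norm_pow, hwn]
      have h2 : ‖((k : ℕ) : ℂ)‖ = (k : ℝ) := by simp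
      rw [h2]
      have hpk : |y| ^ k ≤ ((|y|+1)/2) ^ k := pow_le_pow_left₀ (abs_nonneg y) (by linarith) _
      have h3 : (k:ℝ) * ‖genBinom a k‖ * |y| ^ k ≤ (k:ℝ) * ‖genBinom a k‖ * ((|y|+1)/2) ^ k :=
        mul_le_mul_of_nonneg_left hpk (by positivity)
      have h4 : (k:ℝ) * ‖genBinom a k‖ * ((|y|+1)/2) ^ k
          ≤ ((k:ℝ)+1) * ‖genBinom a k‖ * ((|y|+1)/2) ^ k := by
        have hkk : (k:ℝ) ≤ (k:ℝ) + 1 := by linarith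
        have := mul_le_mul_of_nonneg_right (mul_le_mul_of_nonneg_right hkk
          (norm_nonneg (genBinom a k))) (pow_nonneg (by positivity : (0:ℝ) ≤ (|y|+1)/2) k)
        linarith
      linarith
    -- w * F' y = ∑ k * B k * w ^ k
    have e1 : w * F' y = ∑' k : ℕ, (k : ℂ) * genBinom a k * w ^ k := by
      rw [hF', ← tsum_mul_left]
      refine tsum_congr fun k => ?_
      cases k with
      | zero => simp
      | succ n =>
          rw [Nat.add_sub_cancel, pow_succ]
          ring
    -- F' y = ∑ (a - k) * B k * w ^ k
    have e2 : F' y = ∑' k : ℕ, (a - k) * genBinom a k * w ^ k := by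
      have h0 : F' y = ∑' k : ℕ, (k : ℂ) * genBinom a k * w ^ (k - 1) := rfl
      rw [h0, Sd.tsum_eq_zero_add]
      simp only [Nat.cast_zero, zero_mul, Nat.add_sub_cancel, zero_add]
      refine tsum_congr fun k => ?_
      have := genBinom_succ a k
      push_cast
      rw [show ((k:ℂ) + 1) * genBinom a (k+1) * w ^ k = (((k:ℂ)+1) * genBinom a (k+1)) * w ^ k by ring,
        this]
    have S3 : Summable (fun k : ℕ => (a - k) * genBinom a k * w ^ k) := by
      refine Summable.congr (((S1.mul_left a).sub S2)) fun k => ?_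
      ring
    calc (1 + w) * F' y = F' y + w * F' y := by ring
      _ = (∑' k : ℕ, (a - k) * genBinom a k * w ^ k) + ∑' k : ℕ, (k : ℂ) * genBinom a k * w ^ k := by
          rw [e1, ← e2]
      _ = ∑' k : ℕ, ((a - k) * genBinom a k * w ^ k + (k : ℂ) * genBinom a k * w ^ k) := by
          rw [S3.tsum_add S2]
      _ = ∑' k : ℕ, a * (genBinom a k * w ^ k) := by
          refine tsum_congr fun k => by ring
      _ = a * F y := by rw [hF, tsum_mul_left]
  -- G = F * (1+y)^(-a) is constant on Ioo (-1) 1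
  set G : ℝ → ℂ := fun y => F y * ((1 + y : ℝ) : ℂ) ^ (-a) with hG
  have hGderiv : ∀ y ∈ Set.Ioo (-1 : ℝ) 1, HasDerivAt G 0 y := by
    intro y hy
    have hy0 : (0:ℝ) < 1 + y := by linarith [hy.1]
    have hz : ((1 + y : ℝ) : ℂ) ≠ 0 := by
      exact_mod_cast hy0.ne'
    have hslit : ((1 + y : ℝ) : ℂ) ∈ Complex.slitPlane := by
      rw [Complex.mem_slitPlane_iff]
      left
      simpa using hy0
    -- derivative of the cpow factor
    have hc : HasDerivAt (fun z : ℝ => ((1 + z : ℝ) : ℂ) ^ (-a))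
        (-a * ((1 + y : ℝ) : ℂ) ^ (-a - 1)) y := by
      have he : HasDerivAt (fun v : ℂ => (1 + v) ^ (-a))
          (-a * (1 + (y : ℂ)) ^ (-a - 1) * 1) (y : ℂ) :=
        HasDerivAt.cpow_const ((hasDerivAt_id ((y : ℂ))).const_add 1) (by
          push_cast at hslit ⊢; exact hslit)
      have := he.comp_ofReal
      simp only [mul_one] at this
      refine this.congr_deriv ?_ |>.congr_of_eventuallyEq ?_
      · push_cast; ring
      · filter_upwards with z
        push_cast
        ring_nf
    have hd := (hderiv y hy).mul hc
    have key : F' y * ((1 + y : ℝ) : ℂ) ^ (-a) + F y * (-a * ((1 + y : ℝ) : ℂ) ^ (-a - 1)) = 0 := by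
      have hsplit : ((1 + y : ℝ) : ℂ) ^ (-a) = ((1 + y : ℝ) : ℂ) ^ (-a - 1) * ((1 + y : ℝ) : ℂ) := by
        rw [show (-a : ℂ) = (-a - 1) + 1 by ring, Complex.cpow_add _ _ hz, Complex.cpow_one]
        ring
      rw [hsplit]
      have hode' := hode y hy
      have : ((1 + y : ℝ) : ℂ) = 1 + (y : ℂ) := by push_cast; ring
      rw [this] at *
      calc F' y * (((1:ℂ) + y) ^ (-a - 1) * (1 + (y:ℂ))) + F y * (-a * ((1:ℂ) + y) ^ (-a - 1))
          = ((1 + (y:ℂ)) * F' y - a * F y) * ((1:ℂ) + y) ^ (-a - 1) := by ring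
        _ = 0 := by rw [hode']; ring
    rw [key] at hd
    exact hd
  have hconst : G x = G 0 := by
    have hdiff : DifferentiableOn ℝ G (Set.Ioo (-1 : ℝ) 1) := fun y hy =>
      (hGderiv y hy).differentiableAt.differentiableWithinAt
    refine (convex_Ioo (-1 : ℝ) 1).is_const_of_fderivWithin_eq_zero hdiff ?_ ?_ ?_
    · intro y hy
      rw [fderivWithin_of_isOpen isOpen_Ioo hy]
      have := (hGderiv y hy).hasFDerivAt.fderiv
      rw [this]
      ext v
      simp
    · exact Set.mem_Ioo.2 ⟨by linarith [abs_lt.1 hx |>.1], by linarith [abs_lt.1 hx |>.2]⟩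
    · exact Set.mem_Ioo.2 ⟨by norm_num, by norm_num⟩
  have hG0 : G 0 = 1 := by
    rw [hG]
    simp only
    have hF0 : F 0 = 1 := by
      rw [hF]
      simp only [Complex.ofReal_zero]
      rw [tsum_eq_single 0 (fun k hk => by simp [zero_pow hk])]
      simp [genBinom_zero]
    rw [hF0]
    norm_num
  -- conclude
  have hx0 : (0:ℝ) < 1 + x := by linarith [abs_lt.1 hx |>.1]
  have hz : ((1 + x : ℝ) : ℂ) ≠ 0 := by exact_mod_cast hx0.ne'
  have hpow_ne : ((1 + x : ℝ) : ℂ) ^ a ≠ 0 := by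
    rw [Ne, Complex.cpow_eq_zero_iff]
    tauto
  have hFx : F x = ((1 + x : ℝ) : ℂ) ^ a := by
    have h1 : F x * ((1 + x : ℝ) : ℂ) ^ (-a) = 1 := by
      have := hconst.trans hG0
      simpa [hG] using this
    rw [Complex.cpow_neg, ← div_eq_mul_inv, div_eq_one_iff_eq hpow_ne] at h1
    exact h1
  have hsum := (summable_binom_pow a ha hx).hasSum
  have heq : (∑' k : ℕ, genBinom a k * (x : ℂ) ^ k) = ((1 + x : ℝ) : ℂ) ^ a := hFx
  rwa [heq] at hsum

lemma cpow_eq_exp {t : ℝ} (ht : 0 < t) (c : ℂ) :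
    (t : ℂ) ^ c = Complex.exp (c * Real.log t) := by
  rw [Complex.cpow_def_of_ne_zero (Complex.ofReal_ne_zero.2 ht.ne') c,
    ← Complex.ofReal_log ht.le, mul_comm]

theorem even_fib_zeta_binomial (ε q : ℝ) (hε : 1 < ε) (hq : 0 < q)
    (s : ℂ) (hs : 0 < s.re) :
    (∑' n : ℕ, (q : ℂ) ^ (s / 2) *
        ((ε ^ (2 * ((n : ℤ) + 1)) - ε ^ (-(2 * ((n : ℤ) + 1))) : ℝ) : ℂ) ^ (-s)) =
      (q : ℂ) ^ (s / 2) *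
        ∑' k : ℕ, genBinom (-s) k * (-1 : ℂ) ^ k /
          ((ε : ℂ) ^ (2 * s + 4 * (k : ℂ)) - 1) := by
  have hε0 : (0:ℝ) < ε := lt_trans one_pos hε
  set L : ℝ := Real.log ε with hLdef
  have hL : 0 < L := Real.log_pos hε
  have ha : ∀ i : ℕ, (-s) ≠ (i : ℂ) := by
    intro i h
    have := congrArg Complex.re h
    simp only [Complex.neg_re, Complex.natCast_re] at this
    have : s.re = -(i:ℝ) := by linarith
    have hni : (0:ℝ) ≤ (i:ℝ) := Nat.cast_nonneg i
    linarith
  set W : ℕ → ℂ := fun k => Complex.exp (-(2*s + 4*(k:ℂ)) * L) with hW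
  set A : ℕ → ℕ → ℂ := fun n k => genBinom (-s) k * (-1:ℂ)^k * W k ^ (n+1) with hA
  set P : ℝ := Real.exp (-(2*s.re) * L) with hPdef
  set Q : ℝ := Real.exp (-4 * L) with hQdef
  have hP0 : 0 < P := Real.exp_pos _
  have hP1 : P < 1 := by
    rw [hPdef]
    rw [Real.exp_lt_one_iff]
    nlinarith
  have hQ0 : 0 < Q := Real.exp_pos _
  have hQ1 : Q < 1 := by
    rw [hQdef]
    rw [Real.exp_lt_one_iff]
    nlinarith
  have normW : ∀ k : ℕ, ‖W k‖ = P * Q ^ k := by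
    intro k
    rw [hW]
    simp only [Complex.norm_exp]
    rw [hPdef, hQdef, ← Real.exp_nat_mul, ← Real.exp_add]
    congr 1
    have : ((-(2*s + 4*(k:ℂ)) * (L:ℂ))).re = -(2*s.re + 4*(k:ℝ)) * L := by
      simp [Complex.mul_re, Complex.ofReal_re, Complex.ofReal_im]
      try ring
    rw [this]
    push_cast
    ring
  have hWlt : ∀ k : ℕ, ‖W k‖ < 1 := by
    intro k
    rw [normW k]
    calc P * Q ^ k ≤ P * 1 := by
          have : Q ^ k ≤ 1 := pow_le_one₀ hQ0.le hQ1.le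
          nlinarith
      _ < 1 := by linarith
  -- each term as a k-sum
  have hTerm : ∀ n : ℕ,
      HasSum (fun k : ℕ => A n k)
        (((ε ^ (2 * ((n : ℤ) + 1)) - ε ^ (-(2 * ((n : ℤ) + 1))) : ℝ) : ℂ) ^ (-s)) := by
    intro n
    set b : ℝ := ε ^ (2*n+2) with hbdef
    have hb1 : 1 < b := one_lt_pow₀ hε (by omega)
    have hb0 : 0 < b := lt_trans one_pos hb1
    set x : ℝ := (b^2)⁻¹ with hxdef
    have hx0 : 0 < x := by positivity
    have hx1 : x < 1 := by
      rw [hxdef, inv_lt_one_iff₀]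
      right; nlinarith
    have hzpow : ε ^ (2 * ((n:ℤ) + 1)) - ε ^ (-(2 * ((n:ℤ) + 1))) = b - b⁻¹ := by
      rw [hbdef]
      rw [show (2 * ((n:ℤ) + 1)) = ((2*n+2 : ℕ) : ℤ) by push_cast; ring]
      rw [zpow_neg, zpow_natCast]
    have hbase : b - b⁻¹ = b * (1 - x) := by
      rw [hxdef]
      field_simp
    have hsplit : ((b * (1 - x) : ℝ) : ℂ) ^ (-s)
        = (b : ℂ) ^ (-s) * ((1 - x : ℝ) : ℂ) ^ (-s) := by
      rw [Complex.ofReal_mul]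
      exact Complex.mul_cpow_ofReal_nonneg hb0.le (by linarith : (0:ℝ) ≤ 1 - x) (-s)
    have hbin := binomial_series (-s) ha (x := -x) (by rw [abs_neg, abs_of_pos hx0]; exact hx1)
    rw [show (1 + -x : ℝ) = 1 - x by ring] at hbin
    have hbin2 := hbin.mul_left ((b : ℂ) ^ (-s))
    rw [hzpow, hbase, hsplit]
    refine HasSum.congr_fun hbin2 fun k => ?_
    -- termwise identity
    have hlogb : Real.log b = (2*(n:ℝ)+2) * L := by
      rw [hbdef, Real.log_pow]
      push_cast
      ring
    have hbpow : (b : ℂ) ^ (-s) = Complex.exp (-s * ((2*(n:ℝ)+2) * L)) := by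
      rw [cpow_eq_exp hb0, hlogb]
      norm_cast
    have hxexp : ((x : ℝ) : ℂ) = Complex.exp ((-(4*(n:ℝ)+4) * L : ℝ) : ℂ) := by
      rw [← Complex.ofReal_exp]
      congr 1
      rw [← Real.exp_log hx0, hxdef, Real.log_inv]
      congr 1
      rw [Real.log_pow, show Real.log b = (2*(n:ℝ)+2) * L by
        rw [hbdef, Real.log_pow]; push_cast; ring]
      push_cast
      ring
    have hxk : ((-x : ℝ) : ℂ) ^ k = (-1:ℂ)^k * Complex.exp ((k:ℂ) * (-(4*(n:ℝ)+4) * L)) := by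
      rw [Complex.ofReal_neg, neg_pow, hxexp, ← Complex.exp_nat_mul]
      push_cast
      ring_nf
    rw [hxk, hbpow]
    show genBinom (-s) k * (-1:ℂ)^k * Complex.exp (-(2*s + 4*(k:ℂ)) * L) ^ (n+1) = _
    rw [← Complex.exp_nat_mul]
    have hexp : Complex.exp (((n+1 : ℕ) : ℂ) * (-(2*s + 4*(k:ℂ)) * L)) =
        Complex.exp (-s * ((2*(n:ℝ)+2) * L)) * Complex.exp ((k:ℂ) * (-(4*(n:ℝ)+4) * L)) := by
      rw [← Complex.exp_add]
      congr 1
      push_cast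
      ring
    rw [hexp]
    ring
  -- summability of the double family
  have hA_norm : ∀ n k : ℕ, ‖A n k‖ = ‖genBinom (-s) k‖ * (P * Q ^ k) ^ (n+1) := by
    intro n k
    rw [hA]
    simp only [norm_mul, norm_pow, norm_neg, norm_one, one_pow, mul_one]
    rw [normW k]
  have hbound : ∀ n k : ℕ, ‖A n k‖ ≤ P ^ (n+1) * (‖genBinom (-s) k‖ * Q ^ k) := by
    intro n k
    rw [hA_norm]
    have h1 : (P * Q ^ k) ^ (n+1) = P ^ (n+1) * (Q ^ k) ^ (n+1) := by rw [mul_pow]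
    rw [h1]
    have h2 : (Q ^ k) ^ (n+1) ≤ Q ^ k := by
      have hq1 : Q ^ k ≤ 1 := pow_le_one₀ hQ0.le hQ1.le
      have := pow_le_pow_of_le_one (by positivity : (0:ℝ) ≤ Q ^ k) hq1
        (by omega : 1 ≤ n + 1)
      simpa using this
    have hb : (0:ℝ) ≤ ‖genBinom (-s) k‖ := norm_nonneg _
    have hp : (0:ℝ) ≤ P ^ (n+1) := by positivity
    calc ‖genBinom (-s) k‖ * (P ^ (n+1) * (Q ^ k) ^ (n+1))
        ≤ ‖genBinom (-s) k‖ * (P ^ (n+1) * Q ^ k) := by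
          refine mul_le_mul_of_nonneg_left ?_ hb
          exact mul_le_mul_of_nonneg_left h2 hp
      _ = P ^ (n+1) * (‖genBinom (-s) k‖ * Q ^ k) := by ring
  have hMsum : Summable (fun k : ℕ => ‖genBinom (-s) k‖ * Q ^ k) :=
    summable_norm_genBinom_mul_pow (-s) ha hQ0.le hQ1
  set M : ℝ := ∑' k : ℕ, ‖genBinom (-s) k‖ * Q ^ k with hM
  have hinner : ∀ n : ℕ, Summable (fun k : ℕ => ‖A n k‖) := fun n =>
    Summable.of_nonneg_of_le (fun k => norm_nonneg _) (hbound n) (hMsum.mul_left _)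
  have hgeo : Summable (fun n : ℕ => M * P ^ (n+1)) := by
    refine ((summable_geometric_of_lt_one hP0.le hP1).mul_left (M * P)).congr fun n => ?_
    rw [pow_succ]
    ring
  have houter : Summable (fun n : ℕ => ∑' k : ℕ, ‖A n k‖) := by
    refine Summable.of_nonneg_of_le (fun n => tsum_nonneg fun k => norm_nonneg _)
      (fun n => ?_) hgeo
    calc ∑' k : ℕ, ‖A n k‖ ≤ ∑' k : ℕ, P ^ (n+1) * (‖genBinom (-s) k‖ * Q ^ k) :=
          Summable.tsum_le_tsum (hbound n) (hinner n) (hMsum.mul_left _)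
      _ = P ^ (n+1) * M := by rw [tsum_mul_left]
      _ = M * P ^ (n+1) := by ring
  have hAsum : Summable (Function.uncurry A) := by
    refine Summable.of_norm ?_
    rw [summable_prod_of_nonneg (fun p => norm_nonneg _)]
    exact ⟨fun n => hinner n, houter⟩
  -- geometric evaluation
  have hWne1 : ∀ k : ℕ, (1 : ℂ) - W k ≠ 0 := by
    intro k
    rw [sub_ne_zero]
    intro h
    have := hWlt k
    rw [← h] at this
    simp at this
  have hgeomk : ∀ k : ℕ, ∑' n : ℕ, A n k =
      genBinom (-s) k * (-1:ℂ)^k * (W k * (1 - W k)⁻¹) := by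
    intro k
    have h1 : ∑' n : ℕ, W k ^ (n+1) = W k * (1 - W k)⁻¹ := by
      have : ∀ n : ℕ, W k ^ (n+1) = W k * W k ^ n := fun n => by rw [pow_succ]; ring
      rw [tsum_congr this, tsum_mul_left, tsum_geometric_of_norm_lt_one (hWlt k)]
    rw [hA]
    simp only
    rw [tsum_mul_left, h1]
  -- the cpow on the RHS
  have hfinal : ∀ k : ℕ, genBinom (-s) k * (-1:ℂ)^k * (W k * (1 - W k)⁻¹) =
      genBinom (-s) k * (-1:ℂ)^k / ((ε : ℂ) ^ (2 * s + 4 * (k:ℂ)) - 1) := by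
    intro k
    have hz : (ε : ℂ) ^ (2 * s + 4 * (k:ℂ)) = Complex.exp ((2*s + 4*(k:ℂ)) * L) :=
      cpow_eq_exp hε0 _
    have hWz : W k = (Complex.exp ((2*s + 4*(k:ℂ)) * L))⁻¹ := by
      rw [hW]
      simp only
      rw [← Complex.exp_neg]
      congr 1
      ring
    set z : ℂ := Complex.exp ((2*s + 4*(k:ℂ)) * L) with hzdef
    have hz0 : z ≠ 0 := Complex.exp_ne_zero _
    have hz1 : z - 1 ≠ 0 := by
      have : ‖z⁻¹‖ < 1 := by rw [← hWz]; exact hWlt k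
      intro h
      rw [sub_eq_zero] at h
      rw [h] at this
      simp at this
    rw [hz, hWz]
    rw [div_eq_mul_inv]
    congr 1
    have h1mz : (1 : ℂ) - z⁻¹ = (z - 1) * z⁻¹ := by
      field_simp
    rw [h1mz, mul_inv, inv_inv]
    field_simp
  -- assemble everything
  rw [tsum_mul_left]
  congr 1
  calc ∑' n : ℕ, ((ε ^ (2 * ((n:ℤ) + 1)) - ε ^ (-(2 * ((n:ℤ) + 1))) : ℝ) : ℂ) ^ (-s)
      = ∑' n : ℕ, ∑' k : ℕ, A n k := tsum_congr fun n => ((hTerm n).tsum_eq).symm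
    _ = ∑' k : ℕ, ∑' n : ℕ, A n k := (Summable.tsum_comm (f := A) hAsum).symm
    _ = ∑' k : ℕ, genBinom (-s) k * (-1:ℂ)^k / ((ε : ℂ) ^ (2 * s + 4 * (k:ℂ)) - 1) := by
        refine tsum_congr fun k => ?_
        rw [hgeomk k, hfinal k]
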